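/- For ε1, ε2 ∈ [0,1], let (W⁻, W⁺) be the irregular kernel transform of BEC(ε1) and BEC(ε2). Then I(W⁻) = (1−ε1)·(1−ε2) = I(BEC(ε1))·I(BEC(ε2)) and I(W⁺) = 1 − ε1·ε2 = I(BEC(ε1)) + I(BEC(ε2)) − I(BEC(ε1))·I(BEC(ε2)). -/

import Mathlib

open Finset Real

/-- Symmetric capacity I(W). -/
noncomputable def symCap {Y : Type*} [Fintype Y] (W : Y → ZMod 2 → ℝ) : ℝ :=
  ∑ y, ∑ x : ZMod 2,
    (1 / 2) * W y x * Real.logb 2 (W y x / ((1 / 2) * (W y 0 + W y 1)))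

/-- The minus-channel W⁻ of the irregular kernel transform. -/
noncomputable def Wminus {Y1 Y2 : Type*} (W1 : Y1 → ZMod 2 → ℝ)
    (W2 : Y2 → ZMod 2 → ℝ) : Y1 × Y2 → ZMod 2 → ℝ :=
  fun y u1 => ∑ u2 : ZMod 2, (1 / 2) * W1 y.1 (u1 + u2) * W2 y.2 u2

/-- The plus-channel W⁺ of the irregular kernel transform. -/
noncomputable def Wplus {Y1 Y2 : Type*} (W1 : Y1 → ZMod 2 → ℝ)
    (W2 : Y2 → ZMod 2 → ℝ) : Y1 × Y2 × ZMod 2 → ZMod 2 → ℝ :=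
  fun y u2 => (1 / 2) * W1 y.1 (y.2.2 + u2) * W2 y.2.1 u2

/-- The binary erasure channel with erasure probability ε. -/
noncomputable def BEC (ε : ℝ) : Option (ZMod 2) → ZMod 2 → ℝ :=
  fun y x => match y with
    | some v => if v = x then 1 - ε else 0
    | none => ε

lemma sum_zmod2 (f : ZMod 2 → ℝ) : ∑ x : ZMod 2, f x = f 0 + f 1 :=
  Fin.sum_univ_two f

lemma auxA (c a : ℝ) : c * a * Real.logb 2 (a / (1 / 2 * a)) = c * a := by
  rcases eq_or_ne a 0 with h | h
  · simp [h]
  · have : a / (1 / 2 * a) = 2 := by field_simp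
    rw [this, Real.logb_self_eq_one (by norm_num), mul_one]

lemma auxB (a : ℝ) : Real.logb 2 (a / (1 / 2 * (a + a))) = 0 := by
  rcases eq_or_ne a 0 with h | h
  · simp [h]
  · have : a / (1 / 2 * (a + a)) = 1 := by field_simp; norm_num
    rw [this, Real.logb_one]

lemma symCap_BEC (ε : ℝ) : symCap (BEC ε) = 1 - ε := by
  simp only [symCap, BEC, sum_zmod2, Fintype.sum_option]
  norm_num
  simp only [auxA, auxB]
  ring

lemma symCap_Wminus_BEC (ε1 ε2 : ℝ) :
    symCap (Wminus (BEC ε1) (BEC ε2)) = (1 - ε1) * (1 - ε2) := by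
  simp only [symCap, Wminus, BEC, sum_zmod2, Fintype.sum_option, Fintype.sum_prod_type]
  norm_num [show ((0:ZMod 2) = 2) = True from by decide,
    show ((1:ZMod 2) = 2) = False from by decide]
  simp only [auxB, auxA, mul_zero, add_zero, zero_add]
  ring

lemma symCap_Wplus_BEC (ε1 ε2 : ℝ) :
    symCap (Wplus (BEC ε1) (BEC ε2)) = 1 - ε1 * ε2 := by
  simp only [symCap, Wplus, BEC, sum_zmod2, Fintype.sum_option, Fintype.sum_prod_type]
  norm_num [show ((0:ZMod 2) = 2) = True from by decide,
    show ((1:ZMod 2) = 2) = False from by decide]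
  simp only [auxB, auxA, mul_zero, add_zero, zero_add]
  ring

/-- for BECs, I(W⁻) = (1−ε1)(1−ε2) = I(BEC ε1)·I(BEC ε2) and
I(W⁺) = 1 − ε1·ε2 = I(BEC ε1) + I(BEC ε2) − I(BEC ε1)·I(BEC ε2). -/
theorem symCap_kernel_BEC (ε1 ε2 : ℝ) (h1 : ε1 ∈ Set.Icc (0:ℝ) 1)
    (h2 : ε2 ∈ Set.Icc (0:ℝ) 1) :
    symCap (Wminus (BEC ε1) (BEC ε2)) = (1 - ε1) * (1 - ε2) ∧
    symCap (Wminus (BEC ε1) (BEC ε2)) = symCap (BEC ε1) * symCap (BEC ε2) ∧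
    symCap (Wplus (BEC ε1) (BEC ε2)) = 1 - ε1 * ε2 ∧
    symCap (Wplus (BEC ε1) (BEC ε2)) =
      symCap (BEC ε1) + symCap (BEC ε2) - symCap (BEC ε1) * symCap (BEC ε2) := by
  rw [symCap_BEC, symCap_BEC, symCap_Wminus_BEC, symCap_Wplus_BEC]
  refine ⟨rfl, rfl, rfl, by ring⟩
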